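/- If G is a connected block graph of order n ≥ 2, then the Δ-convex partition number Θ_c(G) equals the minimum number of vertices of a block of G. -/

import Mathlib

variable {V : Type*}

/-- A set `S` is Δ-convex: no vertex outside `S` is adjacent to two adjacent vertices of `S`. -/
def DeltaConvex (G : SimpleGraph V) (S : Set V) : Prop :=
  ∀ ⦃u v w : V⦄, u ∈ S → v ∈ S → G.Adj u v → G.Adj w u → G.Adj w v → w ∈ S

/-- The Δ-convex hull of `S`: the smallest Δ-convex set containing `S`. -/
def DeltaHull (G : SimpleGraph V) (S : Set V) : Set V :=
  ⋂₀ {T | DeltaConvex G T ∧ S ⊆ T}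

/-- A Δ-convex `p`-cover. -/
def IsDeltaCover (G : SimpleGraph V) {p : ℕ} (F : Fin p → Set V) : Prop :=
  (∀ i, DeltaConvex G (F i)) ∧ (⋃ i, F i) = Set.univ ∧
    ∀ i, ¬ F i ⊆ ⋃ j ∈ ({i}ᶜ : Set (Fin p)), F j

/-- A Δ-convex `p`-partition. -/
def IsDeltaPartition (G : SimpleGraph V) {p : ℕ} (F : Fin p → Set V) : Prop :=
  (∀ i, DeltaConvex G (F i)) ∧ (⋃ i, F i) = Set.univ ∧
    (∀ i, (F i).Nonempty) ∧ ∀ i j, i ≠ j → Disjoint (F i) (F j)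

/-- The Δ-convex cover number `φ_c(G)`. -/
noncomputable def coverNumber (G : SimpleGraph V) : ℕ :=
  sInf {p | 2 ≤ p ∧ ∃ F : Fin p → Set V, IsDeltaCover G F}

/-- The Δ-convex partition number `Θ_c(G)`. -/
noncomputable def partitionNumber (G : SimpleGraph V) : ℕ :=
  sInf {p | 2 ≤ p ∧ ∃ F : Fin p → Set V, IsDeltaPartition G F}

/-- A vertex is Δ-extreme iff it lies in no triangle (this characterization is used directly). -/
def DeltaExtreme (G : SimpleGraph V) (u : V) : Prop :=
  ∀ v w : V, ¬ (G.Adj u v ∧ G.Adj u w ∧ G.Adj v w)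

/-- `B` induces a maximal 2-connected (or edge) subgraph candidate: `B` has at least two
vertices, induces a connected subgraph, and removing any single vertex keeps it connected. -/
def IsBiconnectedSet (G : SimpleGraph V) (B : Set V) : Prop :=
  2 ≤ B.ncard ∧ (G.induce B).Connected ∧
    ∀ v ∈ B, (G.induce (B \ {v})).Connected

/-- A block of `G`: a maximal biconnected set. -/
def IsBlock (G : SimpleGraph V) (B : Set V) : Prop :=
  IsBiconnectedSet G B ∧ ∀ B' : Set V, IsBiconnectedSet G B' → B ⊆ B' → B = B'

section BGHelpers
open SimpleGraph Walk

variable (G : SimpleGraph V)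

lemma bg_reach_induce {S : Set V} : ∀ {a c : V} (w : G.Walk a c),
    (∀ x ∈ w.support, x ∈ S) → ∀ (ha : a ∈ S) (hc : c ∈ S),
      (G.induce S).Reachable ⟨a, ha⟩ ⟨c, hc⟩ := by
  intro a c w
  induction w with
  | nil => intro _ ha hc; exact Reachable.refl _
  | @cons a' d' c' h q ih =>
    intro hw ha hc
    have hd : d' ∈ S := hw d' (by simp)
    have hadj : (G.induce S).Adj ⟨a', ha⟩ ⟨d', hd⟩ := h
    exact hadj.reachable.trans (ih (fun x hx => hw x (by simp [hx])) hd hc)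

lemma bg_induce_connected {S : Set V} {a : V} (ha : a ∈ S)
    (h : ∀ y ∈ S, ∃ w : G.Walk a y, ∀ x ∈ w.support, x ∈ S) :
    (G.induce S).Connected := by
  haveI : Nonempty ↥S := ⟨⟨a, ha⟩⟩
  refine SimpleGraph.Connected.mk fun x y => ?_
  obtain ⟨wx, hwx⟩ := h x x.2
  obtain ⟨wy, hwy⟩ := h y y.2
  exact (bg_reach_induce G wx hwx ha x.2).symm.trans (bg_reach_induce G wy hwy ha y.2)

lemma bg_singleton_connected (a : V) : (G.induce {a}).Connected := by
  refine bg_induce_connected G (Set.mem_singleton a) ?_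
  rintro y rfl
  exact ⟨Walk.nil, by simp⟩

lemma bg_exists_block_superset [Fintype V] {A : Set V} (hA : IsBiconnectedSet G A) :
    ∃ B, IsBlock G B ∧ A ⊆ B := by
  classical
  have hfin : {B' : Set V | IsBiconnectedSet G B' ∧ A ⊆ B'}.Finite := Set.toFinite _
  obtain ⟨B, hB, hmax⟩ := Set.Finite.exists_maximalFor id _ hfin ⟨A, hA, subset_rfl⟩
  exact ⟨B, ⟨hB.1, fun B' hB' hsub => le_antisymm hsub (hmax ⟨hB', hB.2.trans hsub⟩ hsub)⟩, hB.2⟩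

lemma bg_edge_biconnected {u v : V} (h : G.Adj u v) : IsBiconnectedSet G {u, v} := by
  have hne := h.ne
  refine ⟨by rw [Set.ncard_pair hne], ?_, ?_⟩
  · refine bg_induce_connected G (show u ∈ ({u, v} : Set V) by simp) ?_
    rintro y (rfl | rfl)
    · exact ⟨Walk.nil, by simp⟩
    · exact ⟨Walk.cons h Walk.nil, by simp⟩
  · rintro x (rfl | rfl)
    · have : ({x, v} : Set V) \ {x} = {v} := by
        ext z; simp only [Set.mem_diff, Set.mem_insert_iff, Set.mem_singleton_iff]
        constructor
        · rintro ⟨rfl | rfl, hz⟩ <;> tauto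
        · rintro rfl; exact ⟨Or.inr rfl, hne.symm⟩
      rw [this]; exact bg_singleton_connected G v
    · have : ({u, x} : Set V) \ {x} = {u} := by
        ext z; simp only [Set.mem_diff, Set.mem_insert_iff, Set.mem_singleton_iff]
        constructor
        · rintro ⟨rfl | rfl, hz⟩ <;> tauto
        · rintro rfl; exact ⟨Or.inl rfl, hne⟩
      rw [this]; exact bg_singleton_connected G u

lemma bg_exists_adj [Fintype V] (hconn : G.Connected) (hn : 2 ≤ Fintype.card V) :
    ∃ u v, G.Adj u v := by
  obtain ⟨u, v, huv⟩ := Fintype.exists_pair_of_one_lt_card (α := V) (by omega)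
  obtain ⟨w⟩ := hconn u v
  cases w with
  | nil => exact absurd rfl huv
  | cons h _ => exact ⟨_, _, h⟩

/-- The branch of `G` at `b ∈ B₀`. -/
def bgPart (B₀ : Set V) (b : V) : Set V :=
  {v | ∃ w : G.Walk b v, ∀ x ∈ w.support, x ∈ B₀ → x = b}

lemma bg_mem_part_self (B₀ : Set V) (b : V) : b ∈ bgPart G B₀ b :=
  ⟨Walk.nil, by simp +contextual⟩

lemma bg_part_cover {B₀ : Set V} :
    ∀ {v c : V} (_ : G.Walk v c), c ∈ B₀ → ∃ x ∈ B₀, v ∈ bgPart G B₀ x := by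
  intro v c w
  induction w with
  | nil => intro hc; exact ⟨_, hc, bg_mem_part_self G B₀ _⟩
  | @cons a d c' h q ih =>
    intro hc
    by_cases ha : a ∈ B₀
    · exact ⟨a, ha, bg_mem_part_self G B₀ a⟩
    · obtain ⟨x, hx, ww, hww⟩ := ih hc
      refine ⟨x, hx, ww.concat h.symm, ?_⟩
      intro y hy
      simp only [Walk.support_concat, List.concat_eq_append, List.mem_append,
        List.mem_singleton] at hy
      rcases hy with hy | rfl
      · exact hww y hy
      · exact fun h' => absurd h' ha

lemma bg_first_in_set {S : Set V} : ∀ {a c : V} (w : G.Walk a c), c ∈ S →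
    ∃ z ∈ S, ∃ w₁ : G.Walk a z, (∀ x ∈ w₁.support, x ∈ S → x = z) ∧
      ∀ x ∈ w₁.support, x ∈ w.support := by
  intro a c w
  induction w with
  | nil => intro hc; exact ⟨_, hc, Walk.nil, by simp +contextual, by simp⟩
  | @cons a d c' h q ih =>
    intro hc
    by_cases ha : a ∈ S
    · exact ⟨a, ha, Walk.nil, by simp +contextual, by simp⟩
    · obtain ⟨z, hz, w₁, h1, h2⟩ := ih hc
      refine ⟨z, hz, Walk.cons h w₁, ?_, ?_⟩
      · intro x hx
        rw [Walk.support_cons, List.mem_cons] at hx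
        rcases hx with rfl | hx
        · exact fun hxS => absurd hxS ha
        · exact h1 x hx
      · intro x hx
        rw [Walk.support_cons, List.mem_cons] at hx
        rcases hx with rfl | hx
        · simp
        · simp [Walk.support_cons, h2 x hx]

lemma bg_reach_start [DecidableEq V] {a c : V} (w : G.Walk a c) {y : V} (hy : y ∈ w.support) :
    ∃ r : G.Walk a y, ∀ x ∈ r.support, x ∈ w.support :=
  ⟨w.takeUntil y hy, fun x hx => Walk.support_takeUntil_subset w hy hx⟩

lemma bg_path_avoid [DecidableEq V] {a c : V} {w : G.Walk a c} (hw : w.IsPath) {x y : V}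
    (hx : x ∈ w.support) (hy : y ∈ w.support) (hyx : y ≠ x) :
    (∃ r : G.Walk y a, ∀ z ∈ r.support, z ∈ w.support ∧ z ≠ x) ∨
    (∃ r : G.Walk y c, ∀ z ∈ r.support, z ∈ w.support ∧ z ≠ x) := by
  classical
  have hnd : w.support.Nodup := hw.support_nodup
  have hsupp : w.support = (w.takeUntil x hx).support ++ (w.dropUntil x hx).support.tail := by
    conv_lhs => rw [← w.take_spec hx]
    rw [Walk.support_append]
  set t := w.takeUntil x hx with ht
  set d := w.dropUntil x hx with hd
  have hnd' : (t.support ++ d.support.tail).Nodup := by rw [← hsupp]; exact hnd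
  have hndt : t.support.Nodup := (List.nodup_append.mp hnd').1
  have hnddt : d.support.tail.Nodup := (List.nodup_append.mp hnd').2.1
  have hdisj : t.support.Disjoint d.support.tail := (List.nodup_append'.mp hnd').2.2
  have hxt : x ∈ t.support := t.end_mem_support
  have hy' : y ∈ t.support ∨ y ∈ d.support.tail := by
    rw [hsupp, List.mem_append] at hy; exact hy
  rcases hy' with hyt | hyd
  · -- reach back to a inside t, avoiding x
    left
    have hxnotin : x ∉ (t.takeUntil y hyt).support := by
      intro hxin
      have hspec := t.take_spec hyt
      have hsupt : t.support = (t.takeUntil y hyt).support ++ (t.dropUntil y hyt).support.tail := by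
        conv_lhs => rw [← hspec]
        rw [Walk.support_append]
      have hxdp : x ∈ (t.dropUntil y hyt).support := (t.dropUntil y hyt).end_mem_support
      have hxdp' : x ∈ (t.dropUntil y hyt).support.tail := by
        have := (t.dropUntil y hyt).support_eq_cons
        rw [this] at hxdp
        rcases List.mem_cons.mp hxdp with rfl | h'
        · exact absurd rfl hyx
        · exact h'
      have : ¬ (t.takeUntil y hyt).support.Disjoint (t.dropUntil y hyt).support.tail :=
        fun hD => hD hxin hxdp'
      exact this (by
        have : t.support.Nodup := hndt
        rw [hsupt] at this
        exact (List.nodup_append'.mp this).2.2)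
    refine ⟨(t.takeUntil y hyt).reverse, ?_⟩
    intro z hz
    rw [Walk.support_reverse, List.mem_reverse] at hz
    have hz1 : z ∈ t.support := Walk.support_takeUntil_subset t hyt hz
    refine ⟨by rw [hsupp]; exact List.mem_append.mpr (Or.inl hz1), ?_⟩
    rintro rfl; exact hxnotin hz
  · -- reach forward to c inside d, avoiding x
    right
    have hyd' : y ∈ d.support := by
      rw [d.support_eq_cons]; exact List.mem_cons.mpr (Or.inr hyd)
    have hdnd : d.support.Nodup := by
      rw [d.support_eq_cons]
      exact List.nodup_cons.mpr ⟨fun hc' => hdisj hxt hc', hnddt⟩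
    have hxnotin : x ∉ (d.dropUntil y hyd').support := by
      intro hxin
      have hspec := d.take_spec hyd'
      have hsupd : d.support = (d.takeUntil y hyd').support ++ (d.dropUntil y hyd').support.tail := by
        conv_lhs => rw [← hspec]
        rw [Walk.support_append]
      have hxtk : x ∈ (d.takeUntil y hyd').support := (d.takeUntil y hyd').start_mem_support
      have hxdp' : x ∈ (d.dropUntil y hyd').support.tail := by
        have := (d.dropUntil y hyd').support_eq_cons
        rw [this] at hxin
        rcases List.mem_cons.mp hxin with rfl | h'
        · exact absurd rfl hyx
        · exact h'
      have hDnd := hdnd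
      rw [hsupd] at hDnd
      exact (List.nodup_append'.mp hDnd).2.2 hxtk hxdp'
    refine ⟨d.dropUntil y hyd', ?_⟩
    intro z hz
    have hz1 : z ∈ d.support := Walk.support_dropUntil_subset d hyd' hz
    have hz2 : z ∈ w.support := by
      rw [d.support_eq_cons] at hz1
      rcases List.mem_cons.mp hz1 with rfl | h'
      · exact hx
      · rw [hsupp]; exact List.mem_append.mpr (Or.inr h')
    refine ⟨hz2, ?_⟩
    rintro rfl; exact hxnotin hz

lemma bg_connected_minus_start [DecidableEq V] {B₀ : Set V}
    (hclq : ∀ u ∈ B₀, ∀ v ∈ B₀, u ≠ v → G.Adj u v)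
    {b b' : V} (hb : b ∈ B₀) (hb' : b' ∈ B₀) (hbb : b ≠ b')
    {p : G.Walk b b'} (hp : p.IsPath) :
    (G.induce ((B₀ ∪ {x | x ∈ p.support}) \ {b})).Connected := by
  have hb'mem : b' ∈ (B₀ ∪ {x | x ∈ p.support}) \ {b} :=
    ⟨Or.inl hb', by simp [hbb.symm]⟩
  refine bg_induce_connected G hb'mem ?_
  rintro y ⟨hyT, hyb⟩
  rw [Set.mem_singleton_iff] at hyb
  rcases hyT with hyB | hyP
  · by_cases hyb' : y = b'
    · subst hyb'; exact ⟨Walk.nil, by simpa using hb'mem⟩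
    · refine ⟨Walk.cons (hclq b' hb' y hyB (Ne.symm hyb')) Walk.nil, ?_⟩
      intro x hx; simp only [Walk.support_cons, Walk.support_nil, List.mem_cons,
        List.mem_singleton, List.not_mem_nil, or_false] at hx
      rcases hx with rfl | rfl
      · exact hb'mem
      · exact ⟨Or.inl hyB, by simpa using hyb⟩
  · have hbsup : b ∈ p.support := p.start_mem_support
    rcases bg_path_avoid G hp hbsup hyP hyb with ⟨r, hr⟩ | ⟨r, hr⟩
    · exact absurd rfl (hr b r.end_mem_support).2
    · refine ⟨r.reverse, ?_⟩
      intro x hx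
      rw [Walk.support_reverse, List.mem_reverse] at hx
      obtain ⟨h1, h2⟩ := hr x hx
      exact ⟨Or.inr h1, by simpa using h2⟩

lemma bg_no_external_path [Fintype V] [DecidableEq V] {B₀ : Set V} (hB : IsBlock G B₀)
    (hclq : ∀ u ∈ B₀, ∀ v ∈ B₀, u ≠ v → G.Adj u v)
    {b b' : V} (hb : b ∈ B₀) (hb' : b' ∈ B₀) (hbb : b ≠ b')
    {p : G.Walk b b'} (hp : p.IsPath)
    (hsup : ∀ x ∈ p.support, x ∈ B₀ → x = b ∨ x = b')
    (hex : ∃ x ∈ p.support, x ∉ B₀) : False := by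
  set T : Set V := B₀ ∪ {x | x ∈ p.support} with hT
  have hBT : B₀ ⊆ T := Set.subset_union_left
  have hbicon : IsBiconnectedSet G T := by
    refine ⟨le_trans hB.1.1 (Set.ncard_le_ncard hBT (Set.toFinite T)), ?_, ?_⟩
    · refine bg_induce_connected G (hBT hb) ?_
      intro y hyT
      rcases hyT with hyB | hyP
      · by_cases hyb : y = b
        · subst hyb; exact ⟨Walk.nil, by simpa using hBT hb⟩
        · refine ⟨Walk.cons (hclq b hb y hyB (Ne.symm hyb)) Walk.nil, ?_⟩
          intro x hx
          simp only [Walk.support_cons, Walk.support_nil, List.mem_cons,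
            List.mem_singleton, List.not_mem_nil, or_false] at hx
          rcases hx with rfl | rfl
          · exact hBT hb
          · exact hBT hyB
      · obtain ⟨r, hr⟩ := bg_reach_start G p hyP
        exact ⟨r, fun x hx => Or.inr (hr x hx)⟩
    · intro x hxT
      by_cases hxB : x ∈ B₀
      · by_cases hxb : x = b
        · subst hxb
          exact bg_connected_minus_start G hclq hb hb' hbb hp
        · by_cases hxb' : x = b'
          · subst hxb'
            have hset : (B₀ ∪ {z | z ∈ p.reverse.support}) = T := by
              ext z; simp [Walk.support_reverse, hT]
            have hrev := bg_connected_minus_start G hclq hb' hb (Ne.symm hbb) hp.reverse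
            rwa [hset] at hrev
          · have hxns : x ∉ p.support := by
              intro hxs
              rcases hsup x hxs hxB with rfl | rfl
              · exact hxb rfl
              · exact hxb' rfl
            have hbmem : b ∈ T \ {x} := ⟨hBT hb, by simpa using (Ne.symm hxb)⟩
            refine bg_induce_connected G hbmem ?_
            rintro y ⟨hyT, hyx⟩
            rw [Set.mem_singleton_iff] at hyx
            rcases hyT with hyB | hyP
            · by_cases hyb : y = b
              · subst hyb; exact ⟨Walk.nil, by simpa using hbmem⟩
              · refine ⟨Walk.cons (hclq b hb y hyB (Ne.symm hyb)) Walk.nil, ?_⟩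
                intro z hz
                simp only [Walk.support_cons, Walk.support_nil, List.mem_cons,
                  List.mem_singleton, List.not_mem_nil, or_false] at hz
                rcases hz with rfl | rfl
                · exact hbmem
                · exact ⟨hBT hyB, by simpa using hyx⟩
            · obtain ⟨r, hr⟩ := bg_reach_start G p hyP
              refine ⟨r, fun z hz => ?_⟩
              have hz1 := hr z hz
              exact ⟨Or.inr hz1, by simp; rintro rfl; exact hxns hz1⟩
      · -- x ∉ B₀, so x ∈ p.support
        have hxs : x ∈ p.support := by
          rcases hxT with h | h
          · exact absurd h hxB
          · exact h
        have hbmem : b ∈ T \ {x} := ⟨hBT hb, by simp; rintro rfl; exact hxB hb⟩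
        refine bg_induce_connected G hbmem ?_
        rintro y ⟨hyT, hyx⟩
        rw [Set.mem_singleton_iff] at hyx
        rcases hyT with hyB | hyP
        · by_cases hyb : y = b
          · subst hyb; exact ⟨Walk.nil, by simpa using hbmem⟩
          · refine ⟨Walk.cons (hclq b hb y hyB (Ne.symm hyb)) Walk.nil, ?_⟩
            intro z hz
            simp only [Walk.support_cons, Walk.support_nil, List.mem_cons,
              List.mem_singleton, List.not_mem_nil, or_false] at hz
            rcases hz with rfl | rfl
            · exact hbmem
            · exact ⟨hBT hyB, by simp; rintro rfl; exact hxB hyB⟩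
        · rcases bg_path_avoid G hp hxs hyP hyx with ⟨r, hr⟩ | ⟨r, hr⟩
          · refine ⟨r.reverse, ?_⟩
            intro z hz
            rw [Walk.support_reverse, List.mem_reverse] at hz
            obtain ⟨h1, h2⟩ := hr z hz
            exact ⟨Or.inr h1, by simpa using h2⟩
          · refine ⟨Walk.cons (hclq b hb b' hb' hbb) r.reverse, ?_⟩
            intro z hz
            simp only [Walk.support_cons, List.mem_cons] at hz
            rcases hz with rfl | hz
            · exact hbmem
            · rw [Walk.support_reverse, List.mem_reverse] at hz
              obtain ⟨h1, h2⟩ := hr z hz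
              exact ⟨Or.inr h1, by simpa using h2⟩
  obtain ⟨x₀, hx₀s, hx₀B⟩ := hex
  have heq : B₀ = T := hB.2 T hbicon hBT
  exact hx₀B (heq ▸ (Or.inr hx₀s : x₀ ∈ T))

lemma bg_no_escape [Fintype V] [DecidableEq V] {B₀ : Set V} (hB : IsBlock G B₀)
    (hclq : ∀ u ∈ B₀, ∀ v ∈ B₀, u ≠ v → G.Adj u v)
    {b b' y : V} (hb : b ∈ B₀) (hb' : b' ∈ B₀) (hbb : b ≠ b') (hy : y ∉ B₀)
    (hy1 : y ∈ bgPart G B₀ b) {w' : G.Walk y b'}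
    (hw' : ∀ x ∈ w'.support, x ∈ B₀ → x = b') : False := by
  obtain ⟨w, hw⟩ := hy1
  set p₁ : G.Walk b y := w.toPath.1 with hp₁def
  have hp₁ : p₁.IsPath := w.toPath.2
  have hsupp₁ : ∀ x ∈ p₁.support, x ∈ B₀ → x = b := fun x hx =>
    hw x (Walk.support_toPath_subset w hx)
  obtain ⟨z, hz, w₁, honly, hsub⟩ := bg_first_in_set G (S := {v | v ∈ p₁.support})
    w'.reverse p₁.end_mem_support
  have hzsub : ∀ x ∈ w₁.support, x ∈ w'.support := fun x hx => by
    have := hsub x hx; rwa [Walk.support_reverse, List.mem_reverse] at this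
  have hzB : z ∉ B₀ := by
    intro hzB
    exact hbb (((hsupp₁ z hz hzB)).symm.trans (hw' z (hzsub z w₁.end_mem_support) hzB))
  set w₂ : G.Walk b' z := w₁.toPath.1 with hw₂def
  have hp₂ : w₂.IsPath := w₁.toPath.2
  have h₂sub : ∀ x ∈ w₂.support, x ∈ w₁.support := fun x hx =>
    Walk.support_toPath_subset w₁ hx
  have honly₂ : ∀ x ∈ w₂.support, x ∈ p₁.support → x = z := fun x hx =>
    honly x (h₂sub x hx)
  set t₁ : G.Walk b z := p₁.takeUntil z hz with ht₁
  have ht₁path : t₁.IsPath := hp₁.takeUntil hz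
  have ht₁sub : ∀ x ∈ t₁.support, x ∈ p₁.support := fun x hx =>
    Walk.support_takeUntil_subset p₁ hz hx
  set P : G.Walk b b' := t₁.append w₂.reverse with hPdef
  have hPsupp : ∀ x ∈ P.support, x ∈ t₁.support ∨ x ∈ w₂.support := by
    intro x hx
    rw [hPdef, Walk.mem_support_append_iff] at hx
    rcases hx with h | h
    · exact Or.inl h
    · right; rw [← List.mem_reverse, ← Walk.support_reverse]; exact h
  have hPpath : P.IsPath := by
    rw [Walk.isPath_def, hPdef, Walk.support_append]
    refine List.Nodup.append ht₁path.support_nodup ?_ ?_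
    · exact (hp₂.reverse.support_nodup).sublist (List.tail_sublist _)
    · intro x hx1 hx2
      have hx2' : x ∈ w₂.support := by
        rw [← List.mem_reverse, ← Walk.support_reverse]
        exact List.mem_of_mem_tail hx2
      have hxz : x = z := honly₂ x hx2' (ht₁sub x hx1)
      subst hxz
      have hcons : w₂.reverse.support = x :: w₂.reverse.support.tail :=
        Walk.support_eq_cons _
      have hnd := hp₂.reverse.support_nodup
      rw [hcons] at hnd
      exact (List.nodup_cons.mp hnd).1 hx2
  have hsupP : ∀ x ∈ P.support, x ∈ B₀ → x = b ∨ x = b' := by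
    intro x hx hxB
    rcases hPsupp x hx with h | h
    · exact Or.inl (hsupp₁ x (ht₁sub x h) hxB)
    · exact Or.inr (hw' x (hzsub x (h₂sub x h)) hxB)
  have hexP : ∃ x ∈ P.support, x ∉ B₀ := by
    refine ⟨z, ?_, hzB⟩
    rw [hPdef, Walk.mem_support_append_iff]
    exact Or.inl t₁.end_mem_support
  exact bg_no_external_path G hB hclq hb hb' hbb hPpath hsupP hexP

lemma bg_part_convex [Fintype V] [DecidableEq V] {B₀ : Set V} (hB : IsBlock G B₀)
    (hclq : ∀ u ∈ B₀, ∀ v ∈ B₀, u ≠ v → G.Adj u v) {b : V} (hb : b ∈ B₀) :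
    DeltaConvex G (bgPart G B₀ b) := by
  intro u v w hu hv huv hwu hwv
  by_cases hwB : w ∈ B₀
  · by_cases hwb : w = b
    · rw [hwb]; exact bg_mem_part_self G B₀ b
    · exfalso
      have key : ∀ u₀ : V, u₀ ∈ bgPart G B₀ b → u₀ ≠ b → G.Adj w u₀ → False := by
        intro u₀ hu₀ hu₀b hadj
        have hu₀B : u₀ ∉ B₀ := by
          intro hmem
          obtain ⟨ww, hww⟩ := hu₀
          exact hu₀b (hww u₀ ww.end_mem_support hmem)
        refine bg_no_escape G hB hclq hb hwB (fun h => hwb h.symm) hu₀B hu₀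
          (w' := Walk.cons hadj.symm Walk.nil) ?_
        intro x hx
        simp only [Walk.support_cons, Walk.support_nil, List.mem_cons,
          List.mem_singleton, List.not_mem_nil, or_false] at hx
        rcases hx with rfl | rfl
        · exact fun h => absurd h hu₀B
        · exact fun _ => rfl
      by_cases hub : u = b
      · subst hub; exact key v hv huv.ne' hwv
      · exact key u hu hub hwu
  · obtain ⟨ww, hww⟩ := hu
    refine ⟨ww.concat hwu.symm, ?_⟩
    intro x hx
    simp only [Walk.support_concat, List.concat_eq_append, List.mem_append,
      List.mem_singleton] at hx
    rcases hx with hx | rfl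
    · exact hww x hx
    · exact fun h => absurd h hwB

lemma bg_part_disjoint [Fintype V] [DecidableEq V] {B₀ : Set V} (hB : IsBlock G B₀)
    (hclq : ∀ u ∈ B₀, ∀ v ∈ B₀, u ≠ v → G.Adj u v)
    {b b' : V} (hb : b ∈ B₀) (hb' : b' ∈ B₀) (hbb : b ≠ b') :
    Disjoint (bgPart G B₀ b) (bgPart G B₀ b') := by
  rw [Set.disjoint_left]
  intro v hv hv'
  have hvB : v ∉ B₀ := by
    intro hmem
    obtain ⟨w1, hw1⟩ := hv
    obtain ⟨w2, hw2⟩ := hv'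
    exact hbb ((hw1 v w1.end_mem_support hmem).symm.trans (hw2 v w2.end_mem_support hmem))
  obtain ⟨w2, hw2⟩ := hv'
  refine bg_no_escape G hB hclq hb hb' hbb hvB hv (w' := w2.reverse) ?_
  intro x hx
  rw [Walk.support_reverse, List.mem_reverse] at hx
  exact hw2 x hx

lemma bg_lower_bound [Fintype V] {G : SimpleGraph V} (hconn : G.Connected)
    (hblock : ∀ B : Set V, IsBlock G B → ∀ u ∈ B, ∀ v ∈ B, u ≠ v → G.Adj u v)
    {k p : ℕ} (hk : ∀ B : Set V, IsBlock G B → k ≤ B.ncard)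
    (hp2 : 2 ≤ p) (hpk : p < k) {F : Fin p → Set V} (hF : IsDeltaPartition G F) :
    False := by
  classical
  obtain ⟨hconv, hcover, hne, hdisj⟩ := hF
  have hchoice : ∀ x : V, ∃ i, x ∈ F i := by
    intro x
    have : x ∈ ⋃ i, F i := hcover ▸ Set.mem_univ x
    exact Set.mem_iUnion.mp this
  choose f hf using hchoice
  have hedge : ∀ u v : V, G.Adj u v → ∀ i, u ∈ F i → v ∈ F i := by
    intro u v huv i hu
    obtain ⟨B, hB, hsubB⟩ := bg_exists_block_superset G (bg_edge_biconnected G huv)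
    have hclq := hblock B hB
    have hcard : (Finset.univ : Finset (Fin p)).card < B.toFinset.card := by
      have h1 := hk B hB
      have h2 : B.ncard = B.toFinset.card := Set.ncard_eq_toFinset_card' B
      simp only [Finset.card_univ, Fintype.card_fin]
      omega
    obtain ⟨a, ha, c, hc, hac, hfeq⟩ :=
      Finset.exists_ne_map_eq_of_card_lt_of_maps_to hcard (fun x _ => Finset.mem_univ (f x))
    rw [Set.mem_toFinset] at ha hc
    have hsame : B ⊆ F (f a) := by
      intro z hz
      by_cases hza : z = a
      · exact hza ▸ hf a
      · by_cases hzc : z = c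
        · subst hzc; exact hfeq ▸ hf z
        · exact hconv (f a) (hf a) (hfeq ▸ hf c) (hclq a ha c hc hac)
            (hclq z hz a ha hza) (hclq z hz c hc hzc)
    have hufa : u ∈ F (f a) := hsame (hsubB (by simp))
    have hia : i = f a := by
      by_contra hne'
      exact Set.disjoint_left.mp (hdisj i (f a) hne') hu hufa
    rw [hia]
    exact hsame (hsubB (by simp))
  have hreach : ∀ (u v : V) (_ : G.Walk u v) (i : Fin p), u ∈ F i → v ∈ F i := by
    intro u v w
    induction w with
    | nil => exact fun i h => h
    | @cons a d c h q ih => exact fun i hu => ih i (hedge a d h i hu)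
  have h01 : (⟨0, by omega⟩ : Fin p) ≠ ⟨1, by omega⟩ := by simp
  obtain ⟨x, hx⟩ := hne ⟨0, by omega⟩
  obtain ⟨y, hy⟩ := hne ⟨1, by omega⟩
  obtain ⟨w⟩ := hconn x y
  exact Set.disjoint_left.mp (hdisj _ _ h01) (hreach x y w _ hx) hy

end BGHelpers

theorem stmt2 [Fintype V] (G : SimpleGraph V) (hconn : G.Connected)
    (hn : 2 ≤ Fintype.card V)
    (hblock : ∀ B : Set V, IsBlock G B → ∀ u ∈ B, ∀ v ∈ B, u ≠ v → G.Adj u v) :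
    partitionNumber G = sInf {n | ∃ B : Set V, IsBlock G B ∧ B.ncard = n} := by
  classical
  obtain ⟨u, v, huv⟩ := bg_exists_adj G hconn hn
  obtain ⟨B₁, hB₁, _⟩ := bg_exists_block_superset G (bg_edge_biconnected G huv)
  have hS₂ne : {n | ∃ B : Set V, IsBlock G B ∧ B.ncard = n}.Nonempty :=
    ⟨B₁.ncard, B₁, hB₁, rfl⟩
  set k := sInf {n | ∃ B : Set V, IsBlock G B ∧ B.ncard = n} with hkdef
  obtain ⟨B₀, hB₀, hB₀k⟩ := Nat.sInf_mem hS₂ne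
  rw [← hkdef] at hB₀k
  have hk2 : 2 ≤ k := hB₀k ▸ hB₀.1.1
  have hclq := hblock B₀ hB₀
  haveI : Fintype ↥B₀ := Set.Finite.fintype (Set.toFinite B₀)
  have hcardB : Fintype.card ↥B₀ = k := by
    rw [← Set.toFinset_card, ← Set.ncard_eq_toFinset_card', hB₀k]
  have e : Fin k ≃ ↥B₀ := (Fintype.equivFinOfCardEq hcardB).symm
  set F : Fin k → Set V := fun i => bgPart G B₀ ((e i : V)) with hFdef
  have hPart : IsDeltaPartition G F := by
    refine ⟨fun i => bg_part_convex G hB₀ hclq (e i).2, ?_,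
      fun i => ⟨(e i : V), bg_mem_part_self G B₀ (e i : V)⟩, ?_⟩
    · ext w
      simp only [Set.mem_iUnion, Set.mem_univ, iff_true]
      obtain ⟨wk⟩ := hconn w ((e ⟨0, by omega⟩ : ↥B₀) : V)
      obtain ⟨x, hx, hwx⟩ := bg_part_cover G wk (e ⟨0, by omega⟩).2
      refine ⟨e.symm ⟨x, hx⟩, ?_⟩
      simpa [hFdef] using hwx
    · intro i j hij
      refine bg_part_disjoint G hB₀ hclq (e i).2 (e j).2 ?_
      intro hcoe
      exact hij (e.injective (Subtype.ext hcoe))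
  rw [partitionNumber]
  apply le_antisymm
  · exact Nat.sInf_le ⟨hk2, F, hPart⟩
  · refine le_csInf ⟨k, hk2, F, hPart⟩ ?_
    rintro p ⟨hp2, F', hF'⟩
    by_contra hlt
    push_neg at hlt
    exact bg_lower_bound hconn hblock (fun B hB => by rw [hkdef]; exact Nat.sInf_le ⟨B, hB, rfl⟩) hp2 hlt hF'
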